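/- Let A be a commutative ring and f ∈ A a nonzerodivisor. Suppose that for every valuation ring V and every ring homomorphism φ : A → V with φ(f) ≠ 0, the element φ(f) is a unit of V. Then f is a unit of A. -/

import Mathlib

universe u

/-- Let `f` be a nonzerodivisor of a commutative ring `A`.  If for every valuation ring `V`
and every ring homomorphism `φ : A → V` with `φ f ≠ 0` the element `φ f` is a unit of `V`,
then `f` is a unit of `A`. -/
theorem isUnit_of_forall_valuationRing_isUnit
    {A : Type u} [CommRing A] (f : A) (hf : f ∈ nonZeroDivisors A)
    (h : ∀ (V : Type u) [CommRing V] [IsDomain V] [ValuationRing V]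
      (φ : A →+* V), φ f ≠ 0 → IsUnit (φ f)) :
    IsUnit f := by
  by_contra hnf
  -- a maximal ideal containing f
  obtain ⟨m, hm, hfm⟩ := (Ideal.span {f}).exists_le_maximal
    (Ideal.span_singleton_ne_top hnf)
  have hfm : f ∈ m := hfm (Ideal.subset_span rfl)
  -- a minimal prime below m
  obtain ⟨q, hq, hqm⟩ := Ideal.exists_minimalPrimes_le (I := (⊥ : Ideal A)) (J := m) bot_le
  haveI hqp : q.IsPrime := hq.1.1
  have hqmin : q ∈ minimalPrimes A := hq
  -- f is not in q since f is a nonzerodivisor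
  have hfq : f ∉ q := by
    intro hfq
    have hnil : IsNilpotent (algebraMap A (Localization q.primeCompl) f) := by
      haveI := Ring.KrullDimLE.of_isLocalization q hqmin (Localization q.primeCompl)
      rw [Ring.KrullDimLE.isNilpotent_iff_mem_maximalIdeal]
      exact (IsLocalization.AtPrime.to_map_mem_maximal_iff _ q f).mpr hfq
    obtain ⟨n, hn⟩ := hnil
    rw [← map_pow] at hn
    obtain ⟨⟨s, hs⟩, hsf⟩ := (IsLocalization.map_eq_zero_iff q.primeCompl
      (Localization q.primeCompl) (f ^ n)).mp hn
    have : s = 0 := (mem_nonZeroDivisors_iff_right.mp (pow_mem hf n)) s hsf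
    exact hs (this ▸ q.zero_mem)
  -- pass to the domain A/q
  let D := A ⧸ q
  let π : A →+* D := Ideal.Quotient.mk q
  have hπf : π f ≠ 0 := fun e => hfq (Ideal.Quotient.eq_zero_iff_mem.mp e)
  let p : Ideal D := m.map π
  haveI hpp : p.IsPrime := Ideal.map_isPrime_of_surjective Ideal.Quotient.mk_surjective
    (by rw [Ideal.mk_ker]; exact hqm)
  have hπfp : π f ∈ p := Ideal.mem_map_of_mem π hfm
  -- localize at p and map to the fraction field
  let R := Localization p.primeCompl
  let K := FractionRing D
  have hle : p.primeCompl ≤ (nonZeroDivisors D).comap (RingHom.id D) := by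
    intro s hs
    have hs0 : s ≠ 0 := fun e => hs (e ▸ p.zero_mem)
    exact mem_nonZeroDivisors_of_ne_zero hs0
  let g : R →+* K := IsLocalization.map (M := p.primeCompl) (T := nonZeroDivisors D)
    K (RingHom.id D) hle
  have hg : ∀ x : D, g (algebraMap D R x) = algebraMap D K x := fun x =>
    IsLocalization.map_eq (M := p.primeCompl) (T := nonZeroDivisors D) hle x
  obtain ⟨V, hV, hVloc⟩ := IsLocalRing.exists_factor_valuationRing g
  let φ : A →+* V := (g.codRestrict V.toSubring hV).comp ((algebraMap D R).comp π)
  have hφval : (φ f : K) = algebraMap D K (π f) := hg (π f)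
  have hφ0 : φ f ≠ 0 := by
    intro e
    have : (φ f : K) = 0 := by rw [e]; rfl
    rw [hφval] at this
    exact hπf ((map_eq_zero_iff _ (IsFractionRing.injective D K)).mp this)
  have := h V φ hφ0
  -- but φ f is a nonunit since π f lies in p
  have hnu : ¬ IsUnit (algebraMap D R (π f)) := by
    intro hu
    have : algebraMap D R (π f) ∈ IsLocalRing.maximalIdeal R :=
      (IsLocalization.AtPrime.to_map_mem_maximal_iff _ p (π f)).mpr hπfp
    exact this hu
  exact hnu (hVloc.1 _ this)
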